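/- The vector field R is the Reeb vector field of the weighted form β₀ in the following sense: for every z ∈ ℂⁿ \ {0}, β₀(z)(R(z)) = 1, and for every v ∈ ℂⁿ, (Dβ₀(z)[R(z)])(v) = (Dβ₀(z)[v])(R(z)); that is, the contraction of the exterior derivative of β₀ with R vanishes identically. -/

import Mathlib

open Complex

/-- The weighted quadratic form `Q(z) = ∑_k a_k |z_k|²` on `ℂⁿ`. -/
noncomputable def Qw (n : ℕ) (a : Fin n → ℝ) (z : Fin n → ℂ) : ℝ :=
  ∑ k, a k * ‖z k‖ ^ 2

/-- The weighted `1`-form `β₀(z)(v) = Q(z)⁻¹·∑_j Im(conj(z_j)·v_j)`. -/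
noncomputable def beta0 (n : ℕ) (a : Fin n → ℝ) (z v : Fin n → ℂ) : ℝ :=
  (Qw n a z)⁻¹ * ∑ j, ((starRingEnd ℂ) (z j) * v j).im

/-- The weighted rotation vector field `R(z)_j = i·a_j·z_j`. -/
noncomputable def ReebW (n : ℕ) (a : Fin n → ℝ) (z : Fin n → ℂ) : Fin n → ℂ :=
  fun j => Complex.I * ((a j : ℝ) : ℂ) * z j

lemma beta0_hasFDerivAt (n : ℕ) (a : Fin n → ℝ) (z : Fin n → ℂ) (w : Fin n → ℂ)
    (hQz : Qw n a z ≠ 0) :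
    HasFDerivAt (fun y => beta0 n a y w)
      ((Qw n a z)⁻¹ • (∑ j, ((w j).im • (Complex.reCLM.comp (ContinuousLinearMap.proj j))
          - (w j).re • (Complex.imCLM.comp (ContinuousLinearMap.proj j))))
        + (∑ j, ((starRingEnd ℂ) (z j) * w j).im) •
          ((ContinuousLinearMap.smulRight (1 : ℝ →L[ℝ] ℝ) (-((Qw n a z) ^ 2)⁻¹)).comp
            (∑ k, (a k) • ((2 * (z k).re) • (Complex.reCLM.comp (ContinuousLinearMap.proj k))
              + (2 * (z k).im) • (Complex.imCLM.comp (ContinuousLinearMap.proj k)))))) z := by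
  have hre : ∀ k, HasFDerivAt (fun y : Fin n → ℂ => (y k).re)
      (Complex.reCLM.comp (ContinuousLinearMap.proj k)) z := fun k =>
    (Complex.reCLM.hasFDerivAt.comp z (ContinuousLinearMap.proj (R:=ℝ) (φ := fun _ : Fin n => ℂ) k).hasFDerivAt)
  have him : ∀ k, HasFDerivAt (fun y : Fin n → ℂ => (y k).im)
      (Complex.imCLM.comp (ContinuousLinearMap.proj k)) z := fun k =>
    (Complex.imCLM.hasFDerivAt.comp z (ContinuousLinearMap.proj (R:=ℝ) (φ := fun _ : Fin n => ℂ) k).hasFDerivAt)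
  have hQ : HasFDerivAt (fun y => Qw n a y)
      (∑ k, (a k) • ((2 * (z k).re) • (Complex.reCLM.comp (ContinuousLinearMap.proj k))
        + (2 * (z k).im) • (Complex.imCLM.comp (ContinuousLinearMap.proj k)))) z := by
    have : (fun y : Fin n → ℂ => Qw n a y)
        = fun y => ∑ k, a k * ((y k).re ^ 2 + (y k).im ^ 2) := by
      funext y
      unfold Qw
      refine Finset.sum_congr rfl fun k _ => ?_
      rw [Complex.sq_norm, Complex.normSq_apply]; ring
    rw [this]
    refine HasFDerivAt.fun_sum fun k _ => ?_
    have h1 : HasFDerivAt (fun y : Fin n → ℂ => (y k).re ^ 2 + (y k).im ^ 2)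
        ((2 * (z k).re) • (Complex.reCLM.comp (ContinuousLinearMap.proj k))
          + (2 * (z k).im) • (Complex.imCLM.comp (ContinuousLinearMap.proj k))) z := by
      have h2 := ((hre k).mul (hre k)).add ((him k).mul (him k))
      have he : (fun y : Fin n → ℂ => (y k).re ^ 2 + (y k).im ^ 2)
          = fun y => (y k).re * (y k).re + (y k).im * (y k).im := by
        funext y; ring
      rw [he]
      refine h2.congr_fderiv ?_
      ext u
      simp
      ring
    simpa using h1.const_mul (a k)
  have hS : HasFDerivAt (fun y => ∑ j, ((starRingEnd ℂ) (y j) * w j).im)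
      (∑ j, ((w j).im • (Complex.reCLM.comp (ContinuousLinearMap.proj j))
        - (w j).re • (Complex.imCLM.comp (ContinuousLinearMap.proj j)))) z := by
    have : (fun y : Fin n → ℂ => ∑ j, ((starRingEnd ℂ) (y j) * w j).im)
        = fun y => ∑ j, ((y j).re * (w j).im - (y j).im * (w j).re) := by
      funext y
      refine Finset.sum_congr rfl fun j _ => ?_
      simp [Complex.mul_im]; ring
    rw [this]
    exact HasFDerivAt.fun_sum fun j _ => ((hre j).mul_const _).sub ((him j).mul_const _)
  have hInv := (hasFDerivAt_inv hQz).comp z hQ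
  exact hInv.mul hS

theorem ReebW_is_reeb_of_beta0 (n : ℕ) (hn : 1 ≤ n) (a : Fin n → ℝ) (ha : ∀ j, 0 < a j)
    (z : Fin n → ℂ) (hz : z ≠ 0) :
    beta0 n a z (ReebW n a z) = 1 ∧
    ∀ v : Fin n → ℂ,
      fderiv ℝ (fun y => beta0 n a y v) z (ReebW n a z)
        = fderiv ℝ (fun y => beta0 n a y (ReebW n a z)) z v := by
  obtain ⟨k₀, hk₀⟩ : ∃ k, z k ≠ 0 := by
    by_contra h; push_neg at h; exact hz (funext h)
  have hQpos : 0 < Qw n a z := by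
    refine Finset.sum_pos' (fun k _ => by have := (ha k).le; positivity) ⟨k₀, Finset.mem_univ _, ?_⟩
    have h1 := ha k₀
    have h2 : ‖z k₀‖ ≠ 0 := by simpa using hk₀
    positivity
  have hQz : Qw n a z ≠ 0 := ne_of_gt hQpos
  have hSR : ∑ j, ((starRingEnd ℂ) (z j) * (ReebW n a z j)).im = Qw n a z := by
    refine Finset.sum_congr rfl fun j _ => ?_
    simp [ReebW, Complex.mul_im, Complex.mul_re, Complex.sq_norm, Complex.normSq_apply]
    ring
  constructor
  · unfold beta0
    rw [hSR, inv_mul_cancel₀ hQz]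
  · intro v
    rw [(beta0_hasFDerivAt n a z v hQz).fderiv, (beta0_hasFDerivAt n a z (ReebW n a z) hQz).fderiv]
    simp only [ContinuousLinearMap.add_apply, ContinuousLinearMap.smul_apply,
      ContinuousLinearMap.coe_sum', Finset.sum_apply, ContinuousLinearMap.sub_apply,
      ContinuousLinearMap.coe_comp', Function.comp_apply, ContinuousLinearMap.proj_apply,
      Complex.reCLM_apply, Complex.imCLM_apply, ContinuousLinearMap.smulRight_apply,
      ContinuousLinearMap.one_apply, smul_eq_mul, ReebW, Complex.mul_re, Complex.mul_im,
      Complex.I_re, Complex.I_im, Complex.ofReal_re, Complex.ofReal_im, Complex.conj_re, Complex.conj_im,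
      zero_mul, mul_zero, one_mul, zero_add, zero_sub, sub_zero, neg_mul, mul_neg, neg_neg]
    have e0 : ∑ x : Fin n, a x * (-(2 * (z x).re * (a x * (z x).im)) + 2 * (z x).im * (a x * (z x).re)) = 0 :=
      Finset.sum_eq_zero fun x _ => by ring
    have e1 : ∑ x : Fin n, (-((v x).im * (a x * (z x).im)) - (v x).re * (a x * (z x).re))
        = -∑ x : Fin n, a x * ((z x).re * (v x).re + (z x).im * (v x).im) := by
      rw [← Finset.sum_neg_distrib]
      exact Finset.sum_congr rfl fun x _ => by ring
    have e2 : ∑ x : Fin n, (a x * (z x).re * (v x).re - -(a x * (z x).im * (v x).im))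
        = ∑ x : Fin n, a x * ((z x).re * (v x).re + (z x).im * (v x).im) :=
      Finset.sum_congr rfl fun x _ => by ring
    have e3 : ∑ x : Fin n, ((z x).re * (a x * (z x).re) + (z x).im * (a x * (z x).im)) = Qw n a z := by
      refine Finset.sum_congr rfl fun x _ => ?_
      rw [Complex.sq_norm, Complex.normSq_apply]; ring
    have e4 : ∑ x : Fin n, a x * (2 * (z x).re * (v x).re + 2 * (z x).im * (v x).im)
        = 2 * ∑ x : Fin n, a x * ((z x).re * (v x).re + (z x).im * (v x).im) := by
      rw [Finset.mul_sum]
      exact Finset.sum_congr rfl fun x _ => by ring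
    rw [e0, e1, e2, e3, e4]
    field_simp
    ring
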